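/- Define semitables over variables x,y,z inductively: z is a semitable, and if a(x,y,z) is a semitable then (Sᵖ(x) ⋅ Sᵠ(y)) ⋅ a(x,y,z) is a semitable, where ⋅ is a binary function symbol. Let Tab(w) be the formula 0 ≐ S(0) ∧ k ≐ (0 ⋅ 0) ⋅ k → k ≐ w. Then a closed term b satisfies ⊨ Tab(b) if and only if b = a(0,0,k) for some semitable a(x,y,z). -/

import Mathlib

open FirstOrder Language

def L : FirstOrder.Language := ⟨fun _ => ℕ, fun _ => ℕ⟩

abbrev CTerm : Type := L.Term Empty

def kC {α : Type} (n : ℕ) : L.Term α := Term.func (n : L.Functions 0) ![]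
def Sf {α : Type} (t : L.Term α) : L.Term α := Term.func ((0 : ℕ) : L.Functions 1) ![t]
def Snum {α : Type} : ℕ → L.Term α → L.Term α
  | 0, t => t
  | m+1, t => Sf (Snum m t)
def pairT {α : Type} (t u : L.Term α) : L.Term α := Term.func ((0 : ℕ) : L.Functions 2) ![t, u]

def Valid {L' : FirstOrder.Language} (φ : L'.Sentence) : Prop :=
  ∀ (M : Type) [L'.Structure M] [Nonempty M], M ⊨ φ

def J (j k : ℕ) : ℕ := (j + k) * (j + k + 1) + k + 1

/-- Semitables over the variables x, y, z (encoded as Fin 3): z is a semitable,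
and if a is a semitable then (Sᵖ(x) ⋅ Sᵠ(y)) ⋅ a is a semitable. -/
inductive IsSemitable : L.Term (Fin 3) → Prop
  | base : IsSemitable (Term.var 2)
  | step (p q : ℕ) (a : L.Term (Fin 3)) : IsSemitable a →
      IsSemitable (pairT (pairT (Snum p (Term.var 0)) (Snum q (Term.var 1))) a)

/-- Tab(w) is the formula 0 ≐ S(0) ∧ k ≐ (0 ⋅ 0) ⋅ k → k ≐ w, with 0 and k the
constants of indices 0 and 1. -/
def TabF (w : CTerm) : L.Sentence :=
  ((Term.equal (kC 0) (Sf (kC 0))) ⊓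
    (Term.equal (kC 1) (pairT (pairT (kC 0) (kC 0)) (kC 1)))).imp (Term.equal (kC 1) w)

/- ### auxiliary material -/

lemma vec1_comp {X Y : Type*} (g : X → Y) (a : X) :
    (fun i => g (![a] i)) = ![g a] := by
  funext i; fin_cases i; simp

lemma vec2_comp {X Y : Type*} (g : X → Y) (a b : X) :
    (fun i => g (![a, b] i)) = ![g a, g b] := by
  funext i; fin_cases i <;> simp

lemma subst_Sf {α β : Type} (t : L.Term α) (σ : α → L.Term β) :
    (Sf t).subst σ = Sf (t.subst σ) := by
  simp only [Sf, Term.subst]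
  congr 1
  exact vec1_comp (fun s => s.subst σ) t

lemma subst_pairT {α β : Type} (t u : L.Term α) (σ : α → L.Term β) :
    (pairT t u).subst σ = pairT (t.subst σ) (u.subst σ) := by
  simp only [pairT, Term.subst]
  congr 1
  exact vec2_comp (fun s => s.subst σ) t u

lemma subst_Snum {α β : Type} (m : ℕ) (t : L.Term α) (σ : α → L.Term β) :
    (Snum m t).subst σ = Snum m (t.subst σ) := by
  induction m with
  | zero => rfl
  | succ m ih =>
    show (Sf (Snum m t)).subst σ = Sf (Snum m (t.subst σ))
    rw [subst_Sf, ih]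

-- the 4-element countermodel
inductive Mdl : Type
  | e0 | ep | ek | ej
deriving DecidableEq

instance : Fintype Mdl := ⟨{Mdl.e0, Mdl.ep, Mdl.ek, Mdl.ej}, by intro x; cases x <;> simp⟩

open Mdl

def pm : Mdl → Mdl → Mdl
  | e0, e0 => ep
  | ep, ek => ek
  | _, _ => ej

def fM : (l : ℕ) → ℕ → (Fin l → Mdl) → Mdl
  | 0, 0, _ => e0
  | 0, 1, _ => ek
  | 1, 0, v => if v 0 = e0 then e0 else ej
  | 2, 0, v => pm (v 0) (v 1)
  | _, _, _ => ej

instance : L.Structure Mdl where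
  funMap := fun {n} f v => fM n f v
  RelMap := fun _ _ => False

instance : Nonempty Mdl := ⟨e0⟩

lemma realize_pairT_Mdl (v : Empty → Mdl) (t u : CTerm) :
    Term.realize v (pairT t u) = pm (Term.realize v t) (Term.realize v u) := by
  show Structure.funMap (L := L) ((0:ℕ) : L.Functions 2) (fun i => Term.realize v (![t, u] i)) = _
  rw [vec2_comp (Term.realize v) t u]
  show pm (![Term.realize v t, Term.realize v u] 0) (![Term.realize v t, Term.realize v u] 1) = _
  simp

lemma realize_Sf_Mdl (v : Empty → Mdl) (t : CTerm) :
    Term.realize v (Sf t) = if Term.realize v t = e0 then e0 else ej := by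
  show Structure.funMap (L := L) ((0:ℕ) : L.Functions 1) (fun i => Term.realize v (![t] i)) = _
  rw [vec1_comp (Term.realize v) t]
  show (if (![Term.realize v t] 0) = e0 then e0 else ej) = _
  simp

lemma matrix_zero_eq {X : Type*} (ts : Fin 0 → X) : ts = ![] := by
  funext i; exact i.elim0

lemma matrix_one_eq {X : Type*} (ts : Fin 1 → X) : ts = ![ts 0] := by
  funext i; fin_cases i; simp

lemma matrix_two_eq {X : Type*} (ts : Fin 2 → X) : ts = ![ts 0, ts 1] := by
  funext i; fin_cases i <;> simp

-- key classification lemma for the countermodel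
lemma key (v : Empty → Mdl) (b : CTerm) :
    (Term.realize v b = e0 → ∃ n, b = Snum n (kC 0)) ∧
    (Term.realize v b = ep → ∃ p q, b = pairT (Snum p (kC 0)) (Snum q (kC 0))) ∧
    (Term.realize v b = ek → ∃ a, IsSemitable a ∧ b = a.subst ![kC 0, kC 0, kC 1]) := by
  induction b with
  | var x => exact x.elim
  | @func l f ts ih =>
    rw [Term.realize_func]
    show (fM l f (fun i => Term.realize v (ts i)) = e0 → _) ∧
      (fM l f (fun i => Term.realize v (ts i)) = ep → _) ∧
      (fM l f (fun i => Term.realize v (ts i)) = ek → _)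
    rcases l with _ | _ | _ | l
    · rcases f with _ | _ | f
      · refine ⟨fun _ => ⟨0, ?_⟩, fun h => by simp [fM] at h, fun h => by simp [fM] at h⟩
        show Term.func ((0:ℕ) : L.Functions 0) ts = kC 0
        rw [matrix_zero_eq ts]; rfl
      · refine ⟨fun h => by simp [fM] at h, fun h => by simp [fM] at h,
          fun _ => ⟨Term.var 2, IsSemitable.base, ?_⟩⟩
        show Term.func ((1:ℕ) : L.Functions 0) ts = _
        rw [matrix_zero_eq ts]
        rfl
      · have hv : fM 0 (f+2) (fun i => Term.realize v (ts i)) = ej := rfl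
        rw [hv]
        refine ⟨fun h => ?_, fun h => ?_, fun h => ?_⟩ <;> simp at h
    · rcases f with _ | f
      · show ((if Term.realize v (ts 0) = e0 then e0 else ej) = e0 → _) ∧
          ((if Term.realize v (ts 0) = e0 then e0 else ej) = ep → _) ∧
          ((if Term.realize v (ts 0) = e0 then e0 else ej) = ek → _)
        by_cases h0 : Term.realize v (ts 0) = e0
        · obtain ⟨n, hn⟩ := (ih 0).1 h0
          refine ⟨fun _ => ⟨n + 1, ?_⟩, fun h => by simp [h0] at h, fun h => by simp [h0] at h⟩
          show Term.func ((0:ℕ) : L.Functions 1) ts = Sf (Snum n (kC 0))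
          rw [matrix_one_eq ts, hn]
          rfl
        · refine ⟨fun h => ?_, fun h => ?_, fun h => ?_⟩ <;> simp [h0] at h
      · have hv : fM 1 (f+1) (fun i => Term.realize v (ts i)) = ej := rfl
        rw [hv]
        refine ⟨fun h => ?_, fun h => ?_, fun h => ?_⟩ <;> simp at h
    · rcases f with _ | f
      · have hne0 : ∀ x y : Mdl, pm x y ≠ e0 := by decide
        have hep : ∀ x y : Mdl, pm x y = ep → x = e0 ∧ y = e0 := by decide
        have hek : ∀ x y : Mdl, pm x y = ek → x = ep ∧ y = ek := by decide
        show (pm (Term.realize v (ts 0)) (Term.realize v (ts 1)) = e0 → _) ∧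
          (pm (Term.realize v (ts 0)) (Term.realize v (ts 1)) = ep → _) ∧
          (pm (Term.realize v (ts 0)) (Term.realize v (ts 1)) = ek → _)
        refine ⟨fun h => absurd h (hne0 _ _), fun h => ?_, fun h => ?_⟩
        · obtain ⟨h0, h1⟩ := hep _ _ h
          obtain ⟨p, hp⟩ := (ih 0).1 h0
          obtain ⟨q, hq⟩ := (ih 1).1 h1
          refine ⟨p, q, ?_⟩
          show Term.func ((0:ℕ) : L.Functions 2) ts = _
          rw [matrix_two_eq ts, hp, hq]; rfl
        · obtain ⟨h0, h1⟩ := hek _ _ h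
          obtain ⟨p, q, hpq⟩ := (ih 0).2.1 h0
          obtain ⟨a, ha, hb⟩ := (ih 1).2.2 h1
          refine ⟨pairT (pairT (Snum p (Term.var 0)) (Snum q (Term.var 1))) a,
            IsSemitable.step p q a ha, ?_⟩
          rw [subst_pairT, subst_pairT, subst_Snum, subst_Snum]
          show Term.func ((0:ℕ) : L.Functions 2) ts = _
          rw [matrix_two_eq ts, hpq, hb]
          rfl
      · have hv : fM 2 (f+1) (fun i => Term.realize v (ts i)) = ej := rfl
        rw [hv]
        refine ⟨fun h => ?_, fun h => ?_, fun h => ?_⟩ <;> simp at h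
    · have hv : fM (l+3) f (fun i => Term.realize v (ts i)) = ej := rfl
      rw [hv]
      refine ⟨fun h => ?_, fun h => ?_, fun h => ?_⟩ <;> simp at h

-- backward direction
lemma realize_semitable {M : Type} [L.Structure M] (v : Empty → M)
    (h1 : Term.realize v (kC 0 : CTerm) = Term.realize v (Sf (kC 0)))
    (h2 : Term.realize v (kC 1 : CTerm)
      = Term.realize v (pairT (pairT (kC 0) (kC 0)) (kC 1)))
    {a : L.Term (Fin 3)} (ha : IsSemitable a) :
    Term.realize v ((a.subst ![kC 0, kC 0, kC 1] : CTerm)) = Term.realize v (kC 1 : CTerm) := by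
  have hS : ∀ (t : CTerm), Term.realize v t = Term.realize v (kC 0) →
      Term.realize v (Sf t) = Term.realize v (kC 0) := by
    intro t ht
    rw [h1]
    show Structure.funMap (L := L) ((0:ℕ) : L.Functions 1) (fun i => Term.realize v (![t] i)) =
      Structure.funMap (L := L) ((0:ℕ) : L.Functions 1) (fun i => Term.realize v (![kC 0] i))
    congr 1
    rw [vec1_comp (Term.realize v) t, vec1_comp (Term.realize v) (kC 0), ht]
  have hSnum : ∀ (m : ℕ), Term.realize v (Snum m (kC 0) : CTerm) = Term.realize v (kC 0) := by
    intro m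
    induction m with
    | zero => rfl
    | succ m ih => exact hS _ ih
  have hpair : ∀ (t u t' u' : CTerm), Term.realize v t = Term.realize v t' →
      Term.realize v u = Term.realize v u' →
      Term.realize v (pairT t u) = Term.realize v (pairT t' u') := by
    intro t u t' u' h h'
    show Structure.funMap (L := L) ((0:ℕ) : L.Functions 2) (fun i => Term.realize v (![t, u] i)) =
      Structure.funMap (L := L) ((0:ℕ) : L.Functions 2) (fun i => Term.realize v (![t', u'] i))
    congr 1
    rw [vec2_comp (Term.realize v) t u, vec2_comp (Term.realize v) t' u', h, h']
  induction ha with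
  | base => simp [Term.subst]
  | step p q a ha ih =>
    rw [subst_pairT, subst_pairT, subst_Snum, subst_Snum]
    have hx : ((Term.var 0 : L.Term (Fin 3)).subst ![kC 0, kC 0, kC 1] : CTerm) = kC 0 := by
      simp [Term.subst]
    have hy : ((Term.var 1 : L.Term (Fin 3)).subst ![kC 0, kC 0, kC 1] : CTerm) = kC 0 := by
      simp [Term.subst]
    rw [hx, hy, h2]
    exact hpair _ _ _ _ (hpair _ _ _ _ (hSnum p) (hSnum q)) ih

theorem stmt_9 (b : CTerm) :
    Valid (TabF b) ↔ ∃ a : L.Term (Fin 3), IsSemitable a ∧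
      b = a.subst ![kC 0, kC 0, kC 1] := by
  constructor
  · intro h
    have hM := h Mdl
    simp only [TabF, Sentence.Realize, Formula.realize_imp, Formula.realize_inf,
      Formula.realize_equal] at hM
    have h1 : Term.realize (default : Empty → Mdl) (kC 0 : CTerm)
        = Term.realize (default : Empty → Mdl) (Sf (kC 0)) := by
      rw [realize_Sf_Mdl]
      show e0 = if e0 = e0 then e0 else ej
      simp
    have h2 : Term.realize (default : Empty → Mdl) (kC 1 : CTerm)
        = Term.realize (default : Empty → Mdl) (pairT (pairT (kC 0) (kC 0)) (kC 1)) := by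
      rw [realize_pairT_Mdl, realize_pairT_Mdl]
      show ek = pm (pm e0 e0) ek
      rfl
    have hb := hM ⟨h1, h2⟩
    exact (key (default : Empty → Mdl) b).2.2 hb.symm
  · rintro ⟨a, ha, rfl⟩
    intro M _ _
    simp only [TabF, Sentence.Realize, Formula.realize_imp, Formula.realize_inf,
      Formula.realize_equal]
    rintro ⟨h1, h2⟩
    exact (realize_semitable (default : Empty → M) h1 h2 ha).symm
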